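/- arXiv:1512.07494 — 2 statements merged into one kernel-verified Lean document; each statement's English description precedes it below -/
import Mathlib

section
/- For an independent edit path P from G1 to G2 with associated subgraphs \u011c1\u2286G1 and \u011c2\u2286G2 (\u011c1 the result of removals, \u011c2 the result of removals then substitutions), the cost of P equals the sum of: removal costs of nodes in V1\\\u011c1 and edges in E1\\\u00ca1, substitution costs of nodes in \u011c1 and edges in \u00ca1, and insertion costs of nodes in V2\\\u011c2 and edges in E2\\\u00ca2. -/
/-- Elementary edit operations on labeled graphs. -/
inductive EditOp (L : Type) where
  | rmV (v : ℕ)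
  | rmE (e : ℕ × ℕ)
  | insV (v : ℕ) (l : L)
  | insE (e : ℕ × ℕ) (l : L)
  | subV (v : ℕ) (l : L)
  | subE (e : ℕ × ℕ) (l : L)

/-- A labeled graph (not assumed simple a priori). -/
structure LabeledGraph (L : Type) where
  V : Finset ℕ
  E : Finset (ℕ × ℕ)
  μ : ℕ → L
  ν : ℕ × ℕ → L

/-- A graph is simple: edges join existing vertices, at most one edge per
ordered pair (automatic from `Finset`), and no self-loops. -/
def LabeledGraph.IsSimple {L : Type} (G : LabeledGraph L) : Prop :=
  (∀ e ∈ G.E, e.1 ∈ G.V ∧ e.2 ∈ G.V) ∧ (∀ e ∈ G.E, e.1 ≠ e.2)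

/-- The effect of an elementary edit operation on a graph. -/
def LabeledGraph.apply {L : Type} (G : LabeledGraph L) : EditOp L → LabeledGraph L
  | .rmV v => { G with V := G.V.erase v }
  | .rmE e => { G with E := G.E.erase e }
  | .insV v l => { G with V := insert v G.V, μ := Function.update G.μ v l }
  | .insE e l => { G with E := insert e G.E, ν := Function.update G.ν e l }
  | .subV v l => { G with μ := Function.update G.μ v l }
  | .subE e l => { G with ν := Function.update G.ν e l }

/-- Edit-path legality constraints for an elementary operation: a node may be
removed only after all its incident edges have been removed; an edge may be
inserted only between two existing nodes, without creating a parallel edge or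
a self-loop; removals and substitutions apply to existing elements; node
insertion requires a fresh node. -/
def LabeledGraph.Legal {L : Type} (G : LabeledGraph L) : EditOp L → Prop
  | .rmV v => v ∈ G.V ∧ ∀ e ∈ G.E, e.1 ≠ v ∧ e.2 ≠ v
  | .rmE e => e ∈ G.E
  | .insV v _ => v ∉ G.V
  | .insE e _ => e.1 ∈ G.V ∧ e.2 ∈ G.V ∧ e ∉ G.E ∧ e.1 ≠ e.2
  | .subV v _ => v ∈ G.V
  | .subE e _ => e ∈ G.E

/-- `IsEditPath G P G'` : the sequence of elementary operations `P` is an edit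
path of `G` (each operation is legal when performed) transforming `G` into `G'`. -/
inductive IsEditPath {L : Type} : LabeledGraph L → List (EditOp L) → LabeledGraph L → Prop
  | nil (G : LabeledGraph L) : IsEditPath G [] G
  | cons {G G'' : LabeledGraph L} {op : EditOp L} {P : List (EditOp L)} :
      G.Legal op → IsEditPath (G.apply op) P G'' → IsEditPath G (op :: P) G''

/-- Classification of elementary operations. -/
def EditOp.isRemoval {L : Type} : EditOp L → Prop
  | .rmV _ => True | .rmE _ => True | _ => False

def EditOp.isSubstitution {L : Type} : EditOp L → Prop
  | .subV _ _ => True | .subE _ _ => True | _ => False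

def EditOp.isInsertion {L : Type} : EditOp L → Prop
  | .insV _ _ => True | .insE _ _ => True | _ => False

/-- An independent edit path: no node or edge is both substituted and removed,
none is both substituted and inserted, no inserted element is later removed,
and every node or edge is substituted at most once. -/
def Indep {L : Type} (P : List (EditOp L)) : Prop :=
  (∀ v l, EditOp.subV v l ∈ P → EditOp.rmV (L := L) v ∉ P) ∧
  (∀ e l, EditOp.subE e l ∈ P → EditOp.rmE (L := L) e ∉ P) ∧
  (∀ v l l', EditOp.subV v l ∈ P → EditOp.insV v l' ∉ P) ∧
  (∀ e l l', EditOp.subE e l ∈ P → EditOp.insE e l' ∉ P) ∧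
  (∀ v l, ¬ List.Sublist [EditOp.insV v l, EditOp.rmV v] P) ∧
  (∀ e l, ¬ List.Sublist [EditOp.insE e l, EditOp.rmE e] P) ∧
  (∀ v, P.countP (fun op => match op with | .subV w _ => decide (w = v) | _ => false) ≤ 1) ∧
  (∀ e, P.countP (fun op => match op with | .subE f _ => decide (f = e) | _ => false) ≤ 1)

/-- Cost of an elementary operation, performed on the current graph `G`
(substitution costs depend on the old and new labels). -/
def opCost {L : Type} (cvd : ℕ → ℝ) (ced : ℕ × ℕ → ℝ) (cvi : ℕ → L → ℝ)
    (cei : ℕ × ℕ → L → ℝ) (cvs : ℕ → L → L → ℝ) (ces : ℕ × ℕ → L → L → ℝ)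
    (G : LabeledGraph L) : EditOp L → ℝ
  | .rmV v => cvd v
  | .rmE e => ced e
  | .insV v l => cvi v l
  | .insE e l => cei e l
  | .subV v l => cvs v (G.μ v) l
  | .subE e l => ces e (G.ν e) l

/-- Cost of an edit path: the sum of the costs of its elementary operations. -/
def pathCost {L : Type} (cvd : ℕ → ℝ) (ced : ℕ × ℕ → ℝ) (cvi : ℕ → L → ℝ)
    (cei : ℕ × ℕ → L → ℝ) (cvs : ℕ → L → L → ℝ) (ces : ℕ × ℕ → L → L → ℝ)
    (G : LabeledGraph L) : List (EditOp L) → ℝ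
  | [] => 0
  | op :: P => opCost cvd ced cvi cei cvs ces G op
      + pathCost cvd ced cvi cei cvs ces (G.apply op) P

section Aux

variable {L : Type} (cvd : ℕ → ℝ) (ced : ℕ × ℕ → ℝ) (cvi : ℕ → L → ℝ)
    (cei : ℕ × ℕ → L → ℝ) (cvs : ℕ → L → L → ℝ) (ces : ℕ × ℕ → L → L → ℝ)

lemma pathCost_append {G G' : LabeledGraph L} {P : List (EditOp L)}
    (h : IsEditPath G P G') (Q : List (EditOp L)) :
    pathCost cvd ced cvi cei cvs ces G (P ++ Q)
      = pathCost cvd ced cvi cei cvs ces G P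
        + pathCost cvd ced cvi cei cvs ces G' Q := by
  induction h with
  | nil G => simp [pathCost]
  | cons hl hp ih => simp [pathCost, ih, add_assoc]

lemma removal_subset {G H : LabeledGraph L} {R : List (EditOp L)}
    (h : IsEditPath G R H) : (∀ op ∈ R, op.isRemoval) →
    H.V ⊆ G.V ∧ H.E ⊆ G.E := by
  induction h with
  | nil => exact fun _ => ⟨subset_rfl, subset_rfl⟩
  | @cons G G'' op P hl hp ih =>
    intro hR
    have hr := hR _ (List.mem_cons_self)
    have ih' := ih (fun o ho => hR o (List.mem_cons_of_mem _ ho))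
    cases op with
    | rmV v =>
      simp only [LabeledGraph.apply] at ih'
      exact ⟨ih'.1.trans (Finset.erase_subset _ _), ih'.2⟩
    | rmE e =>
      simp only [LabeledGraph.apply] at ih'
      exact ⟨ih'.1, ih'.2.trans (Finset.erase_subset _ _)⟩
    | insV v l => simp [EditOp.isRemoval] at hr
    | insE e l => simp [EditOp.isRemoval] at hr
    | subV v l => simp [EditOp.isRemoval] at hr
    | subE e l => simp [EditOp.isRemoval] at hr

lemma removal_cost {G H : LabeledGraph L} {R : List (EditOp L)}
    (h : IsEditPath G R H) : (∀ op ∈ R, op.isRemoval) →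
    pathCost cvd ced cvi cei cvs ces G R
      = (∑ v ∈ G.V \ H.V, cvd v) + (∑ e ∈ G.E \ H.E, ced e) := by
  induction h with
  | nil => simp [pathCost]
  | @cons G G'' op P hl hp ih =>
    intro hR
    have hr := hR _ (List.mem_cons_self)
    have hR' : ∀ o ∈ P, o.isRemoval := fun o ho => hR o (List.mem_cons_of_mem _ ho)
    have ih' := ih hR'
    have hsub := removal_subset hp hR'
    cases op with
    | rmV v =>
      simp only [LabeledGraph.apply] at ih' hsub ⊢
      have hv : v ∈ G.V := hl.1
      have hnv : v ∉ G''.V := fun hmem => (Finset.notMem_erase v G.V) (hsub.1 hmem)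
      have hset : G.V \ G''.V = insert v (G.V.erase v \ G''.V) := by
        ext w
        by_cases hw : w = v <;>
          simp [hw, hv, hnv, Finset.mem_sdiff, Finset.mem_erase]
      have hnot : v ∉ G.V.erase v \ G''.V := by simp
      rw [pathCost]; simp only [LabeledGraph.apply]; rw [ih', hset, Finset.sum_insert hnot]
      simp [opCost]; ring
    | rmE e =>
      simp only [LabeledGraph.apply] at ih' hsub ⊢
      have he : e ∈ G.E := hl
      have hne : e ∉ G''.E := fun hmem => (Finset.notMem_erase e G.E) (hsub.2 hmem)
      have hset : G.E \ G''.E = insert e (G.E.erase e \ G''.E) := by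
        ext f
        by_cases hf : f = e <;>
          simp [hf, he, hne, Finset.mem_sdiff, Finset.mem_erase]
      have hnot : e ∉ G.E.erase e \ G''.E := by simp
      rw [pathCost]; simp only [LabeledGraph.apply]; rw [ih', hset, Finset.sum_insert hnot]
      simp [opCost]; ring
    | insV v l => simp [EditOp.isRemoval] at hr
    | insE e l => simp [EditOp.isRemoval] at hr
    | subV v l => simp [EditOp.isRemoval] at hr
    | subE e l => simp [EditOp.isRemoval] at hr

lemma insertion_aux {H G2 : LabeledGraph L} {I : List (EditOp L)}
    (h : IsEditPath H I G2) : (∀ op ∈ I, op.isInsertion) →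
    H.V ⊆ G2.V ∧ H.E ⊆ G2.E ∧ (∀ v ∈ H.V, G2.μ v = H.μ v)
      ∧ (∀ e ∈ H.E, G2.ν e = H.ν e) := by
  induction h with
  | nil => exact fun _ => ⟨subset_rfl, subset_rfl, fun _ _ => rfl, fun _ _ => rfl⟩
  | @cons G G'' op P hl hp ih =>
    intro hI
    have hi := hI _ (List.mem_cons_self)
    have ih' := ih (fun o ho => hI o (List.mem_cons_of_mem _ ho))
    cases op with
    | rmV v => simp [EditOp.isInsertion] at hi
    | rmE e => simp [EditOp.isInsertion] at hi
    | subV v l => simp [EditOp.isInsertion] at hi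
    | subE e l => simp [EditOp.isInsertion] at hi
    | insV v l =>
      simp only [LabeledGraph.apply] at ih'
      obtain ⟨h1, h2, h3, h4⟩ := ih'
      refine ⟨(Finset.subset_insert _ _).trans h1, h2, ?_, h4⟩
      intro w hw
      have hwv : w ≠ v := fun hwv => hl (hwv ▸ hw)
      rw [h3 w (Finset.mem_insert_of_mem hw), Function.update_of_ne hwv]
    | insE e l =>
      simp only [LabeledGraph.apply] at ih'
      obtain ⟨h1, h2, h3, h4⟩ := ih'
      refine ⟨h1, (Finset.subset_insert _ _).trans h2, h3, ?_⟩
      intro f hf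
      have hfe : f ≠ e := fun hfe => hl.2.2.1 (hfe ▸ hf)
      rw [h4 f (Finset.mem_insert_of_mem hf), Function.update_of_ne hfe]

lemma insertion_cost {H G2 : LabeledGraph L} {I : List (EditOp L)}
    (h : IsEditPath H I G2) : (∀ op ∈ I, op.isInsertion) →
    pathCost cvd ced cvi cei cvs ces H I
      = (∑ v ∈ G2.V \ H.V, cvi v (G2.μ v)) + (∑ e ∈ G2.E \ H.E, cei e (G2.ν e)) := by
  induction h with
  | nil => simp [pathCost]
  | @cons G G'' op P hl hp ih =>
    intro hI
    have hi := hI _ (List.mem_cons_self)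
    have hI' : ∀ o ∈ P, o.isInsertion := fun o ho => hI o (List.mem_cons_of_mem _ ho)
    have ih' := ih hI'
    have haux := insertion_aux hp hI'
    cases op with
    | rmV v => simp [EditOp.isInsertion] at hi
    | rmE e => simp [EditOp.isInsertion] at hi
    | subV v l => simp [EditOp.isInsertion] at hi
    | subE e l => simp [EditOp.isInsertion] at hi
    | insV v l =>
      simp only [LabeledGraph.apply] at ih' haux
      have hv : v ∈ G''.V := haux.1 (Finset.mem_insert_self _ _)
      have hμ : G''.μ v = l := by
        rw [haux.2.2.1 v (Finset.mem_insert_self _ _), Function.update_self]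
      have hnV : v ∉ G.V := hl
      have hset : G''.V \ G.V = insert v (G''.V \ insert v G.V) := by
        ext w
        by_cases hw : w = v <;>
          simp [hw, hv, hnV, Finset.mem_sdiff, Finset.mem_insert]
      have hnot : v ∉ G''.V \ insert v G.V := by simp
      rw [pathCost]; simp only [LabeledGraph.apply]; rw [ih', hset, Finset.sum_insert hnot, hμ]
      simp [opCost]; ring
    | insE e l =>
      simp only [LabeledGraph.apply] at ih' haux
      have he : e ∈ G''.E := haux.2.1 (Finset.mem_insert_self _ _)
      have hν : G''.ν e = l := by
        rw [haux.2.2.2 e (Finset.mem_insert_self _ _), Function.update_self]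
      have hnE : e ∉ G.E := hl.2.2.1
      have hset : G''.E \ G.E = insert e (G''.E \ insert e G.E) := by
        ext f
        by_cases hf : f = e <;>
          simp [hf, he, hnE, Finset.mem_sdiff, Finset.mem_insert]
      have hnot : e ∉ G''.E \ insert e G.E := by simp
      rw [pathCost]; simp only [LabeledGraph.apply]; rw [ih', hset, Finset.sum_insert hnot, hν]
      simp [opCost]; ring

lemma subst_aux {H H2 : LabeledGraph L} {S : List (EditOp L)}
    (h : IsEditPath H S H2) : (∀ op ∈ S, op.isSubstitution) →
    H2.V = H.V ∧ H2.E = H.E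
      ∧ (∀ v, (∀ l, EditOp.subV v l ∉ S) → H2.μ v = H.μ v)
      ∧ (∀ e, (∀ l, EditOp.subE e l ∉ S) → H2.ν e = H.ν e) := by
  induction h with
  | nil => exact fun _ => ⟨rfl, rfl, fun _ _ => rfl, fun _ _ => rfl⟩
  | @cons G G'' op P hl hp ih =>
    intro hS
    have hs := hS _ (List.mem_cons_self)
    have ih' := ih (fun o ho => hS o (List.mem_cons_of_mem _ ho))
    cases op with
    | rmV v => simp [EditOp.isSubstitution] at hs
    | rmE e => simp [EditOp.isSubstitution] at hs
    | insV v l => simp [EditOp.isSubstitution] at hs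
    | insE e l => simp [EditOp.isSubstitution] at hs
    | subV v l =>
      simp only [LabeledGraph.apply] at ih'
      obtain ⟨h1, h2, h3, h4⟩ := ih'
      refine ⟨h1, h2, ?_, fun e he => h4 e (fun l' hl' =>
        he l' (List.mem_cons_of_mem _ hl'))⟩
      intro w hw
      have hwv : w ≠ v := by
        intro hwv; exact hw l (hwv ▸ List.mem_cons_self)
      rw [h3 w (fun l' hl' => hw l' (List.mem_cons_of_mem _ hl')),
        Function.update_of_ne hwv]
    | subE e l =>
      simp only [LabeledGraph.apply] at ih'
      obtain ⟨h1, h2, h3, h4⟩ := ih'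
      refine ⟨h1, h2, fun w hw => h3 w (fun l' hl' =>
        hw l' (List.mem_cons_of_mem _ hl')), ?_⟩
      intro f hf
      have hfe : f ≠ e := by
        intro hfe; exact hf l (hfe ▸ List.mem_cons_self)
      rw [h4 f (fun l' hl' => hf l' (List.mem_cons_of_mem _ hl')),
        Function.update_of_ne hfe]

lemma subst_cost (hid_v : ∀ v l, cvs v l l = 0) (hid_e : ∀ e l, ces e l l = 0)
    {H H2 : LabeledGraph L} {S : List (EditOp L)}
    (h : IsEditPath H S H2) : (∀ op ∈ S, op.isSubstitution) →
    (∀ v, S.countP (fun op => match op with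
      | .subV w _ => decide (w = v) | _ => false) ≤ 1) →
    (∀ e, S.countP (fun op => match op with
      | .subE f _ => decide (f = e) | _ => false) ≤ 1) →
    pathCost cvd ced cvi cei cvs ces H S
      = (∑ v ∈ H.V, cvs v (H.μ v) (H2.μ v)) + (∑ e ∈ H.E, ces e (H.ν e) (H2.ν e)) := by
  induction h with
  | nil => simp [pathCost, hid_v, hid_e]
  | @cons G G'' op P hl hp ih =>
    intro hS hcv hce
    have hs := hS _ (List.mem_cons_self)
    have hS' : ∀ o ∈ P, o.isSubstitution := fun o ho => hS o (List.mem_cons_of_mem _ ho)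
    have hcv' : ∀ v, P.countP (fun op => match op with
        | .subV w _ => decide (w = v) | _ => false) ≤ 1 := by
      intro v; have := hcv v; rw [List.countP_cons] at this; omega
    have hce' : ∀ e, P.countP (fun op => match op with
        | .subE f _ => decide (f = e) | _ => false) ≤ 1 := by
      intro e; have := hce e; rw [List.countP_cons] at this; omega
    have ih' := ih hS' hcv' hce'
    have haux := subst_aux hp hS'
    cases op with
    | rmV v => simp [EditOp.isSubstitution] at hs
    | rmE e => simp [EditOp.isSubstitution] at hs
    | insV v l => simp [EditOp.isSubstitution] at hs
    | insE e l => simp [EditOp.isSubstitution] at hs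
    | subV v l =>
      simp only [LabeledGraph.apply] at ih' haux
      have hv : v ∈ G.V := hl
      have hzero : P.countP (fun op => match op with
          | .subV w _ => decide (w = v) | _ => false) = 0 := by
        have := hcv v
        rw [List.countP_cons] at this
        simp at this
        exact List.countP_eq_zero.mpr (by simpa using this)
      have hnosub : ∀ l', EditOp.subV v l' ∉ P := by
        intro l' hmem
        have := List.countP_eq_zero.mp hzero _ hmem
        simp at this
      have hμ : G''.μ v = l := by
        rw [haux.2.2.1 v hnosub, Function.update_self]
      -- vertex sum manipulation
      have hvsum : (∑ w ∈ G.V, cvs w (G.μ w) (G''.μ w))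
          = cvs v (G.μ v) l
            + ∑ w ∈ G.V, cvs w (Function.update G.μ v l w) (G''.μ w) := by
        rw [← Finset.add_sum_erase G.V _ hv,
          ← Finset.add_sum_erase G.V
            (fun w => cvs w (Function.update G.μ v l w) (G''.μ w)) hv]
        rw [Function.update_self, hμ, hid_v, zero_add]
        congr 1
        apply Finset.sum_congr rfl
        intro w hw
        rw [Function.update_of_ne (Finset.mem_erase.mp hw).1]
      rw [pathCost]; simp only [LabeledGraph.apply]; rw [ih', hvsum]
      simp [opCost]; ring
    | subE e l =>
      simp only [LabeledGraph.apply] at ih' haux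
      have he : e ∈ G.E := hl
      have hzero : P.countP (fun op => match op with
          | .subE f _ => decide (f = e) | _ => false) = 0 := by
        have := hce e
        rw [List.countP_cons] at this
        simp at this
        exact List.countP_eq_zero.mpr (by simpa using this)
      have hnosub : ∀ l', EditOp.subE e l' ∉ P := by
        intro l' hmem
        have := List.countP_eq_zero.mp hzero _ hmem
        simp at this
      have hν : G''.ν e = l := by
        rw [haux.2.2.2 e hnosub, Function.update_self]
      have hesum : (∑ f ∈ G.E, ces f (G.ν f) (G''.ν f))
          = ces e (G.ν e) l
            + ∑ f ∈ G.E, ces f (Function.update G.ν e l f) (G''.ν f) := by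
        rw [← Finset.add_sum_erase G.E _ he,
          ← Finset.add_sum_erase G.E
            (fun f => ces f (Function.update G.ν e l f) (G''.ν f)) he]
        rw [Function.update_self, hν, hid_e, zero_add]
        congr 1
        apply Finset.sum_congr rfl
        intro f hf
        rw [Function.update_of_ne (Finset.mem_erase.mp hf).1]
      rw [pathCost]; simp only [LabeledGraph.apply]; rw [ih', hesum]
      simp [opCost]; ring

end Aux

/-- the cost of an independent edit path `P = (R,S,I)` from `G1`
to `G2`, with `H1` the result of the removals and `H2` the result of removals
then substitutions, equals the sum of removal costs of nodes in `V1\V̂1` and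
edges in `E1\Ê1`, substitution costs of nodes in `V̂1` and edges in `Ê1`
(identity substitutions having zero cost), and insertion costs of nodes in
`V2\V̂2` and edges in `E2\Ê2`. -/
theorem indep_editPath_cost {L : Type} (G1 G2 H1 H2 : LabeledGraph L)
    (cvd : ℕ → ℝ) (ced : ℕ × ℕ → ℝ) (cvi : ℕ → L → ℝ) (cei : ℕ × ℕ → L → ℝ)
    (cvs : ℕ → L → L → ℝ) (ces : ℕ × ℕ → L → L → ℝ)
    (hid_v : ∀ v l, cvs v l l = 0) (hid_e : ∀ e l, ces e l l = 0)
    (R S I : List (EditOp L)) (hG1 : G1.IsSimple)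
    (hR : ∀ op ∈ R, op.isRemoval) (hS : ∀ op ∈ S, op.isSubstitution)
    (hI : ∀ op ∈ I, op.isInsertion)
    (hInd : Indep (R ++ S ++ I))
    (h1 : IsEditPath G1 R H1) (h2 : IsEditPath H1 S H2) (h3 : IsEditPath H2 I G2) :
    pathCost cvd ced cvi cei cvs ces G1 (R ++ S ++ I) =
      (∑ v ∈ G1.V \ H1.V, cvd v) + (∑ e ∈ G1.E \ H1.E, ced e)
      + (∑ v ∈ H1.V, cvs v (H1.μ v) (H2.μ v)) + (∑ e ∈ H1.E, ces e (H1.ν e) (H2.ν e))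
      + (∑ v ∈ G2.V \ H2.V, cvi v (G2.μ v)) + (∑ e ∈ G2.E \ H2.E, cei e (G2.ν e)) := by
  have hsplit : pathCost cvd ced cvi cei cvs ces G1 (R ++ S ++ I)
      = pathCost cvd ced cvi cei cvs ces G1 R
        + pathCost cvd ced cvi cei cvs ces H1 S
        + pathCost cvd ced cvi cei cvs ces H2 I := by
    rw [List.append_assoc, pathCost_append cvd ced cvi cei cvs ces h1,
      pathCost_append cvd ced cvi cei cvs ces h2, add_assoc]
  have hcv : ∀ v, S.countP (fun op => match op with
      | .subV w _ => decide (w = v) | _ => false) ≤ 1 := by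
    intro v
    have := hInd.2.2.2.2.2.2.1 v
    rw [List.countP_append, List.countP_append] at this
    omega
  have hce : ∀ e, S.countP (fun op => match op with
      | .subE f _ => decide (f = e) | _ => false) ≤ 1 := by
    intro e
    have := hInd.2.2.2.2.2.2.2 e
    rw [List.countP_append, List.countP_append] at this
    omega
  rw [hsplit, removal_cost cvd ced cvi cei cvs ces h1 hR,
    subst_cost cvd ced cvi cei cvs ces hid_v hid_e h2 hS hcv hce,
    insertion_cost cvd ced cvi cei cvs ces h3 hI]
  ring
end

section
/- Let P be the restricted edit path between simple graphs G1 and G2 corresponding to the \u03b5-assignment vector x (vectorized \u03b5-assignment matrix). Let \u0394 = D if both graphs are undirected and \u0394 = D + D^T otherwise, with D the quadratic edge-cost matrix and c the linear node-cost vector. Then the cost of P equals (1/2)x^T\u0394x + c^Tx; conversely every restricted edit path's cost has this form, so GED(G1,G2) = min{(1/2)x^T\u0394x + c^Tx : x a vectorized \u03b5-assignment matrix}. -/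
/-! GED as a quadratic assignment problem over ε-assignments.

`G1` has node set `Fin n` and edge set `E1`; `G2` has node set `Fin m` and
edge set `E2`.  An element of the augmented set `V1^ε` is `inl i` (a node of
`G1`) or `inr k` (the dummy node `ε_k`, `k ∈ V2`); an element of `V2^ε` is
`inl k` (a node of `G2`) or `inr i` (the dummy node `ε_i`, `i ∈ V1`).  The
edit costs are given directly on node/edge pairs (thus encoding the labels). -/

/-- Index of an entry of the vectorized ε-assignment matrix: a pair
`(element of V1^ε, element of V2^ε)`. -/
abbrev AssignIdx (n m : ℕ) : Type := (Fin n ⊕ Fin m) × (Fin m ⊕ Fin n)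

/-- A single node mapping is allowed unless it maps a node `i ∈ V1` to a dummy
`ε_{i'}` with `i' ≠ i`, or a dummy `ε_k` to a node `k' ∈ V2` with `k' ≠ k`. -/
def allowedMap {n m : ℕ} : (Fin n ⊕ Fin m) → (Fin m ⊕ Fin n) → Bool
  | Sum.inl i, Sum.inr i' => i' == i
  | Sum.inr k, Sum.inl k' => k' == k
  | _, _ => true

/-- The edge of `E` determined by a pair of elements of an augmented node set,
if any (dummy nodes carry no edges). -/
def edgeOf {α β : Type} [DecidableEq α] (E : Finset (α × α)) :
    (α ⊕ β) → (α ⊕ β) → Option (α × α)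
  | Sum.inl i, Sum.inl j => if (i, j) ∈ E then some (i, j) else none
  | _, _ => none

/-- The quadratic cost matrix `D`: `d_{ik,jl} = ω` if one of the mappings
`i → k`, `j → l` is forbidden; otherwise the substitution cost of
`(i,j) → (k,l)` if `(i,j) ∈ E1` and `(k,l) ∈ E2`, the removal cost of `(i,j)`
if only `(i,j) ∈ E1`, the insertion cost of `(k,l)` if only `(k,l) ∈ E2`, and
`0` otherwise. -/
noncomputable def Dmat {n m : ℕ} (E1 : Finset (Fin n × Fin n))
    (E2 : Finset (Fin m × Fin m))
    (ces : Fin n × Fin n → Fin m × Fin m → ℝ)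
    (ced : Fin n × Fin n → ℝ) (cei : Fin m × Fin m → ℝ) (ω : ℝ)
    (p q : AssignIdx n m) : ℝ :=
  if allowedMap p.1 p.2 && allowedMap q.1 q.2 then
    match edgeOf E1 p.1 q.1, edgeOf E2 p.2 q.2 with
    | some e, some f => ces e f
    | some e, none => ced e
    | none, some f => cei f
    | none, none => 0
  else ω

/-- The linear (node) cost vector `c`: substitution costs on the
`V1 × V2` block, removal costs on the diagonal of the removal block (`ω`
off-diagonal), insertion costs on the diagonal of the insertion block (`ω`
off-diagonal), and `0` on the auxiliary `ε → ε` block. -/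
noncomputable def cvecQ {n m : ℕ} (cvs : Fin n → Fin m → ℝ)
    (cvd : Fin n → ℝ) (cvi : Fin m → ℝ) (ω : ℝ) : AssignIdx n m → ℝ
  | (Sum.inl i, Sum.inl k) => cvs i k
  | (Sum.inl i, Sum.inr i') => if i' = i then cvd i else ω
  | (Sum.inr k, Sum.inl k') => if k' = k then cvi k else ω
  | (Sum.inr _, Sum.inr _) => 0

/-- `x` is (the vectorization of) an ε-assignment matrix: binary, all row and
column sums equal `1`, and the removal/insertion blocks are diagonal. -/
def IsEpsAssign {n m : ℕ} (x : AssignIdx n m → ℝ) : Prop :=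
  (∀ p, x p = 0 ∨ x p = 1) ∧
  (∀ a : Fin n ⊕ Fin m, ∑ b : Fin m ⊕ Fin n, x (a, b) = 1) ∧
  (∀ b : Fin m ⊕ Fin n, ∑ a : Fin n ⊕ Fin m, x (a, b) = 1) ∧
  (∀ (i : Fin n) (i' : Fin n), x (Sum.inl i, Sum.inr i') = 1 → i' = i) ∧
  (∀ (k : Fin m) (k' : Fin m), x (Sum.inr k, Sum.inl k') = 1 → k' = k)

/-- A restricted edit path from `G1` to `G2`, in canonical form: node
substitutions (an injective partial matching of `Fin n` with `Fin m`), node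
removals and insertions (the non-matched nodes), together with the induced
edge substitutions, removals and insertions. -/
structure RestrictedEditPath (n m : ℕ) (E1 : Finset (Fin n × Fin n))
    (E2 : Finset (Fin m × Fin m)) where
  nsub : Finset (Fin n × Fin m)
  nrem : Finset (Fin n)
  nins : Finset (Fin m)
  esub : Finset ((Fin n × Fin n) × (Fin m × Fin m))
  erem : Finset (Fin n × Fin n)
  eins : Finset (Fin m × Fin m)
  nsub_fun : ∀ p ∈ nsub, ∀ q ∈ nsub, p.1 = q.1 → p.2 = q.2
  nsub_inj : ∀ p ∈ nsub, ∀ q ∈ nsub, p.2 = q.2 → p.1 = q.1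
  nrem_eq : nrem = Finset.univ \ nsub.image Prod.fst
  nins_eq : nins = Finset.univ \ nsub.image Prod.snd
  esub_mem : ∀ q ∈ esub, q.1 ∈ E1 ∧ q.2 ∈ E2 ∧
      (q.1.1, q.2.1) ∈ nsub ∧ (q.1.2, q.2.2) ∈ nsub
  esub_total : ∀ e ∈ E1, ∀ (k l : Fin m),
      (e.1, k) ∈ nsub → (e.2, l) ∈ nsub → (k, l) ∈ E2 → (e, (k, l)) ∈ esub
  erem_eq : erem = E1 \ esub.image Prod.fst
  eins_eq : eins = E2 \ esub.image Prod.snd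

/-- Cost of a restricted edit path (`κ` is `1` for directed graphs and `1/2`
for undirected graphs, where every edge is stored in both orientations and
every edge operation is hence counted twice). -/
noncomputable def pathCostR {n m : ℕ} {E1 : Finset (Fin n × Fin n)}
    {E2 : Finset (Fin m × Fin m)} (cvs : Fin n → Fin m → ℝ) (cvd : Fin n → ℝ)
    (cvi : Fin m → ℝ) (ces : Fin n × Fin n → Fin m × Fin m → ℝ)
    (ced : Fin n × Fin n → ℝ) (cei : Fin m × Fin m → ℝ) (κ : ℝ)
    (P : RestrictedEditPath n m E1 E2) : ℝ :=
  (∑ p ∈ P.nsub, cvs p.1 p.2) + (∑ i ∈ P.nrem, cvd i) + (∑ k ∈ P.nins, cvi k)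
    + κ * ((∑ q ∈ P.esub, ces q.1 q.2) + (∑ e ∈ P.erem, ced e)
            + (∑ f ∈ P.eins, cei f))

/-- The ε-assignment vector associated with a restricted edit path. -/
def assignOf {n m : ℕ} {E1 : Finset (Fin n × Fin n)}
    {E2 : Finset (Fin m × Fin m)} (P : RestrictedEditPath n m E1 E2) :
    AssignIdx n m → ℝ
  | (Sum.inl i, Sum.inl k) => if (i, k) ∈ P.nsub then 1 else 0
  | (Sum.inl i, Sum.inr i') => if i' = i ∧ i ∈ P.nrem then 1 else 0
  | (Sum.inr k, Sum.inl k') => if k' = k ∧ k ∈ P.nins then 1 else 0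
  | (Sum.inr k, Sum.inr i) => if (i, k) ∈ P.nsub then 1 else 0

/-- The quadratic form `xᵀΔx`. -/
noncomputable def quadForm {n m : ℕ} (Δ : AssignIdx n m → AssignIdx n m → ℝ)
    (x : AssignIdx n m → ℝ) : ℝ :=
  ∑ p : AssignIdx n m, ∑ q : AssignIdx n m, x p * Δ p q * x q

/-- The linear form `cᵀx`. -/
noncomputable def linForm {n m : ℕ} (c x : AssignIdx n m → ℝ) : ℝ :=
  ∑ p : AssignIdx n m, c p * x p

open Sum Finset

section GEDHelpers

variable {n m : ℕ} {E1 : Finset (Fin n × Fin n)} {E2 : Finset (Fin m × Fin m)}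

/-- helper: collapse a sum against an option equality with a side condition -/
lemma sumCollapseOpt {α : Type*} [Fintype α] [DecidableEq α] (o : Option α)
    (C : α → Prop) [DecidablePred C] (f : α → ℝ) :
    (∑ k : α, if C k ∧ o = some k then f k else 0)
      = o.elim 0 (fun k => if C k then f k else 0) := by
  cases o with
  | none => simp
  | some k0 =>
    rw [Fintype.sum_eq_single k0]
    · simp
    · intro b hb
      rw [if_neg]
      rintro ⟨-, h⟩
      exact hb (Option.some_injective _ h).symm

lemma sum_elim {α β : Type*} [Fintype α] (o : Option β) (g : α → β → ℝ) :
    ∑ k : α, o.elim 0 (g k) = o.elim 0 (fun l => ∑ k : α, g k l) := by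
  cases o <;> simp

lemma sum_elim' {α β : Type*} [Fintype α] (o : Option β) (A : α → ℝ) (B : α → β → ℝ) :
    ∑ a : α, o.elim (A a) (B a) = o.elim (∑ a : α, A a) (fun b => ∑ a : α, B a b) := by
  cases o <;> simp

lemma two_ones {ι : Type*} [Fintype ι] [DecidableEq ι] (f : ι → ℝ)
    (h01 : ∀ b, f b = 0 ∨ f b = 1) (hsum : ∑ b, f b = 1)
    {b b' : ι} (hb : f b = 1) (hb' : f b' = 1) : b = b' := by
  by_contra hne
  have h2 : (2 : ℝ) ≤ ∑ b, f b := by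
    have : ∑ x ∈ ({b, b'} : Finset ι), f x = 2 := by
      rw [Finset.sum_pair hne, hb, hb']; norm_num
    rw [← this]
    refine Finset.sum_le_sum_of_subset_of_nonneg (Finset.subset_univ _) ?_
    intro i _ _
    rcases h01 i with h | h <;> rw [h] <;> norm_num
  rw [hsum] at h2; linarith

lemma sum_one_exists {ι : Type*} [Fintype ι] [DecidableEq ι] (f : ι → ℝ)
    (h01 : ∀ b, f b = 0 ∨ f b = 1) (hsum : ∑ b, f b = 1) : ∃ b, f b = 1 := by
  by_contra h
  push_neg at h
  have : ∑ b, f b = 0 := Finset.sum_eq_zero fun b _ => (h01 b).resolve_right (h b)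
  rw [hsum] at this; norm_num at this

section Path
variable (P : RestrictedEditPath n m E1 E2)

lemma mem_nrem_iff (i : Fin n) : i ∈ P.nrem ↔ ∀ k, (i, k) ∉ P.nsub := by
  rw [P.nrem_eq, Finset.mem_sdiff]
  simp only [Finset.mem_univ, true_and]
  constructor
  · intro h k hk
    exact h (Finset.mem_image.2 ⟨(i, k), hk, rfl⟩)
  · intro h hc
    obtain ⟨p, hp, hpi⟩ := Finset.mem_image.1 hc
    have h2 : (p.1, p.2) ∈ P.nsub := hp
    rw [hpi] at h2
    exact h p.2 h2

lemma mem_nins_iff (k : Fin m) : k ∈ P.nins ↔ ∀ i, (i, k) ∉ P.nsub := by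
  rw [P.nins_eq, Finset.mem_sdiff]
  simp only [Finset.mem_univ, true_and]
  constructor
  · intro h i hk
    exact h (Finset.mem_image.2 ⟨(i, k), hk, rfl⟩)
  · intro h hc
    obtain ⟨p, hp, hpi⟩ := Finset.mem_image.1 hc
    have h2 : (p.1, p.2) ∈ P.nsub := hp
    rw [hpi] at h2
    exact h p.1 h2

lemma mem_esub_iff (i j : Fin n) (k l : Fin m) :
    ((i, j), (k, l)) ∈ P.esub ↔
      (i, j) ∈ E1 ∧ (k, l) ∈ E2 ∧ (i, k) ∈ P.nsub ∧ (j, l) ∈ P.nsub := by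
  constructor
  · intro h; exact P.esub_mem _ h
  · rintro ⟨h1, h2, h3, h4⟩; exact P.esub_total _ h1 k l h3 h4 h2

/-- the partial matching function of a path -/
noncomputable def tauOf (i : Fin n) : Option (Fin m) :=
  if h : ∃ k, (i, k) ∈ P.nsub then some h.choose else none

noncomputable def rhoOf (k : Fin m) : Option (Fin n) :=
  if h : ∃ i, (i, k) ∈ P.nsub then some h.choose else none

lemma tau_some_iff (i : Fin n) (k : Fin m) :
    tauOf P i = some k ↔ (i, k) ∈ P.nsub := by
  unfold tauOf
  split
  · rename_i h
    have hc := h.choose_spec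
    simp only [Option.some.injEq]
    constructor
    · rintro rfl; exact hc
    · intro hk; exact P.nsub_fun _ hc _ hk rfl
  · rename_i h
    simp only [reduceCtorEq, false_iff]
    exact fun hk => h ⟨k, hk⟩

lemma rho_some_iff (k : Fin m) (i : Fin n) :
    rhoOf P k = some i ↔ (i, k) ∈ P.nsub := by
  unfold rhoOf
  split
  · rename_i h
    have hc := h.choose_spec
    simp only [Option.some.injEq]
    constructor
    · rintro rfl; exact hc
    · intro hk; exact P.nsub_inj _ hc _ hk rfl
  · rename_i h
    simp only [reduceCtorEq, false_iff]
    exact fun hk => h ⟨i, hk⟩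

lemma tau_none_iff (i : Fin n) : tauOf P i = none ↔ i ∈ P.nrem := by
  rw [mem_nrem_iff]
  cases htau : tauOf P i with
  | none =>
    simp only [true_iff]
    intro k hk
    rw [← tau_some_iff P i k] at hk
    rw [htau] at hk; exact nomatch hk
  | some k =>
    simp only [reduceCtorEq, false_iff, not_forall, not_not]
    exact ⟨k, (tau_some_iff P i k).1 htau⟩

lemma rho_none_iff (k : Fin m) : rhoOf P k = none ↔ k ∈ P.nins := by
  rw [mem_nins_iff]
  cases hrho : rhoOf P k with
  | none =>
    simp only [true_iff]
    intro i hk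
    rw [← rho_some_iff P k i] at hk
    rw [hrho] at hk; exact nomatch hk
  | some i =>
    simp only [reduceCtorEq, false_iff, not_forall, not_not]
    exact ⟨i, (rho_some_iff P k i).1 hrho⟩

/-- the bijection on augmented node sets induced by a path -/
noncomputable def sigmaOf : (Fin n ⊕ Fin m) → (Fin m ⊕ Fin n) :=
  Sum.elim (fun i => (tauOf P i).elim (inr i) inl)
    (fun k => (rhoOf P k).elim (inl k) inr)

lemma assign_indicator (p : AssignIdx n m) :
    assignOf P p = if p.2 = sigmaOf P p.1 then 1 else 0 := by
  obtain ⟨a, b⟩ := p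
  cases a with
  | inl i =>
    cases htau : tauOf P i with
    | none =>
      have hrem : i ∈ P.nrem := (tau_none_iff P i).1 htau
      cases b with
      | inl k =>
        have : (i, k) ∉ P.nsub := by
          rw [← tau_some_iff P i k, htau]; exact fun h => nomatch h
        simp [assignOf, sigmaOf, htau, this]
      | inr i' =>
        simp [assignOf, sigmaOf, htau, hrem]
    | some k0 =>
      have hsub : (i, k0) ∈ P.nsub := (tau_some_iff P i k0).1 htau
      have hrem : i ∉ P.nrem := fun h => (mem_nrem_iff P i).1 h k0 hsub
      cases b with
      | inl k =>
        by_cases hk : k = k0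
        · subst hk; simp [assignOf, sigmaOf, htau, hsub]
        · have : (i, k) ∉ P.nsub := fun h =>
            hk (P.nsub_fun _ h _ hsub rfl)
          simp [assignOf, sigmaOf, htau, this, hk]
      | inr i' =>
        simp [assignOf, sigmaOf, htau, hrem]
  | inr k =>
    cases hrho : rhoOf P k with
    | none =>
      have hins : k ∈ P.nins := (rho_none_iff P k).1 hrho
      cases b with
      | inl k' =>
        simp [assignOf, sigmaOf, hrho, hins]
      | inr i =>
        have : (i, k) ∉ P.nsub := by
          rw [← rho_some_iff P k i, hrho]; exact fun h => nomatch h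
        simp [assignOf, sigmaOf, hrho, this]
    | some i0 =>
      have hsub : (i0, k) ∈ P.nsub := (rho_some_iff P k i0).1 hrho
      have hins : k ∉ P.nins := fun h => (mem_nins_iff P k).1 h i0 hsub
      cases b with
      | inl k' =>
        simp [assignOf, sigmaOf, hrho, hins]
      | inr i =>
        by_cases hi : i = i0
        · subst hi; simp [assignOf, sigmaOf, hrho, hsub]
        · have : (i, k) ∉ P.nsub := fun h =>
            hi (P.nsub_inj _ h _ hsub rfl)
          simp [assignOf, sigmaOf, hrho, this, hi]

noncomputable def sigmaInv : (Fin m ⊕ Fin n) → (Fin n ⊕ Fin m) :=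
  Sum.elim (fun k => (rhoOf P k).elim (inr k) inl)
    (fun i => (tauOf P i).elim (inl i) inr)

lemma sigma_inv (b : Fin m ⊕ Fin n) : sigmaOf P (sigmaInv P b) = b := by
  cases b with
  | inl k =>
    cases hrho : rhoOf P k with
    | none => simp [sigmaInv, sigmaOf, hrho]
    | some i =>
      have : tauOf P i = some k := (tau_some_iff P i k).2 ((rho_some_iff P k i).1 hrho)
      simp [sigmaInv, sigmaOf, hrho, this]
  | inr i =>
    cases htau : tauOf P i with
    | none => simp [sigmaInv, sigmaOf, htau]
    | some k =>
      have : rhoOf P k = some i := (rho_some_iff P k i).2 ((tau_some_iff P i k).1 htau)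
      simp [sigmaInv, sigmaOf, htau, this]

lemma inv_sigma (a : Fin n ⊕ Fin m) : sigmaInv P (sigmaOf P a) = a := by
  cases a with
  | inl i =>
    cases htau : tauOf P i with
    | none => simp [sigmaInv, sigmaOf, htau]
    | some k =>
      have : rhoOf P k = some i := (rho_some_iff P k i).2 ((tau_some_iff P i k).1 htau)
      simp [sigmaInv, sigmaOf, htau, this]
  | inr k =>
    cases hrho : rhoOf P k with
    | none => simp [sigmaInv, sigmaOf, hrho]
    | some i =>
      have : tauOf P i = some k := (tau_some_iff P i k).2 ((rho_some_iff P k i).1 hrho)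
      simp [sigmaInv, sigmaOf, hrho, this]

lemma isEps : IsEpsAssign (assignOf P) := by
  refine ⟨?_, ?_, ?_, ?_, ?_⟩
  · intro p
    rw [assign_indicator]
    by_cases h : p.2 = sigmaOf P p.1 <;> simp [h]
  · intro a
    simp only [assign_indicator]
    simp [Finset.sum_ite_eq']
  · intro b
    have key : ∀ a, ((b = sigmaOf P a) ↔ (a = sigmaInv P b)) := fun a =>
      ⟨fun h => by rw [h, inv_sigma], fun h => by rw [h, sigma_inv]⟩
    calc ∑ a : Fin n ⊕ Fin m, assignOf P (a, b)
        = ∑ a : Fin n ⊕ Fin m, if a = sigmaInv P b then 1 else 0 := by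
          refine Finset.sum_congr rfl fun a _ => ?_
          rw [assign_indicator]
          exact if_congr (key a) rfl rfl
      _ = 1 := by simp [Finset.sum_ite_eq']
  · intro i i' h
    by_cases hc : i' = i
    · exact hc
    · exfalso; simp [assignOf, hc] at h
  · intro k k' h
    by_cases hc : k' = k
    · exact hc
    · exfalso; simp [assignOf, hc] at h

lemma lin_eq (cvs : Fin n → Fin m → ℝ) (cvd : Fin n → ℝ) (cvi : Fin m → ℝ) (ω : ℝ) :
    linForm (cvecQ cvs cvd cvi ω) (assignOf P) =
      (∑ p ∈ P.nsub, cvs p.1 p.2) + (∑ i ∈ P.nrem, cvd i)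
        + (∑ k ∈ P.nins, cvi k) := by
  rw [linForm, Fintype.sum_prod_type, Fintype.sum_sum_type]
  simp only [Fintype.sum_sum_type, cvecQ, assignOf]
  have hLL : ∑ i : Fin n, ∑ k : Fin m,
      cvs i k * (if (i, k) ∈ P.nsub then (1:ℝ) else 0) = ∑ p ∈ P.nsub, cvs p.1 p.2 := by
    simp only [mul_ite, mul_one, mul_zero]
    rw [← Finset.sum_product', Finset.univ_product_univ]
    simp only [Prod.mk.eta]
    rw [Finset.sum_ite_mem, Finset.univ_inter]
  have hLR : ∑ i : Fin n, ∑ i' : Fin n,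
      (if i' = i then cvd i else ω) * (if i' = i ∧ i ∈ P.nrem then (1:ℝ) else 0)
        = ∑ i ∈ P.nrem, cvd i := by
    have h1 : ∀ i i' : Fin n,
        (if i' = i then cvd i else ω) * (if i' = i ∧ i ∈ P.nrem then (1:ℝ) else 0)
          = if i' = i then (if i ∈ P.nrem then cvd i else 0) else 0 := by
      intro i i'
      by_cases h1 : i' = i <;> by_cases h2 : i ∈ P.nrem <;> simp [h1, h2]
    simp only [h1]
    simp [Finset.sum_ite_eq', Finset.sum_ite_mem]
  have hRL : ∑ k : Fin m, ∑ k' : Fin m,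
      (if k' = k then cvi k else ω) * (if k' = k ∧ k ∈ P.nins then (1:ℝ) else 0)
        = ∑ k ∈ P.nins, cvi k := by
    have h1 : ∀ k k' : Fin m,
        (if k' = k then cvi k else ω) * (if k' = k ∧ k ∈ P.nins then (1:ℝ) else 0)
          = if k' = k then (if k ∈ P.nins then cvi k else 0) else 0 := by
      intro k k'
      by_cases h1 : k' = k <;> by_cases h2 : k ∈ P.nins <;> simp [h1, h2]
    simp only [h1]
    simp [Finset.sum_ite_eq', Finset.sum_ite_mem]
  simp only [Finset.sum_add_distrib, zero_mul, Finset.sum_const_zero, add_zero]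
  rw [hLL, hLR, hRL]

lemma tau_to_rho (F : Fin n → Fin m → ℝ) :
    ∑ i : Fin n, (tauOf P i).elim 0 (F i)
      = ∑ k : Fin m, (rhoOf P k).elim 0 (fun i => F i k) := by
  have h1 : ∀ i, (tauOf P i).elim 0 (F i)
      = ∑ k : Fin m, if (i, k) ∈ P.nsub then F i k else 0 := by
    intro i
    cases h : tauOf P i with
    | none =>
      have : ∀ k, (i, k) ∉ P.nsub := fun k hk => by
        rw [← tau_some_iff P i k] at hk; rw [h] at hk; exact nomatch hk
      simp [this]
    | some k0 =>
      have h2 : ∀ k, ((i, k) ∈ P.nsub) ↔ k = k0 := by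
        intro k
        rw [← tau_some_iff P i k, h]
        simp [eq_comm]
      simp only [h2, Option.elim]
      simp
  have h2 : ∀ k, (rhoOf P k).elim 0 (fun i => F i k)
      = ∑ i : Fin n, if (i, k) ∈ P.nsub then F i k else 0 := by
    intro k
    cases h : rhoOf P k with
    | none =>
      have : ∀ i, (i, k) ∉ P.nsub := fun i hk => by
        rw [← rho_some_iff P k i] at hk; rw [h] at hk; exact nomatch hk
      simp [this]
    | some i0 =>
      have h2 : ∀ i, ((i, k) ∈ P.nsub) ↔ i = i0 := by
        intro i
        rw [← rho_some_iff P k i, h]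
        simp [eq_comm]
      simp only [h2, Option.elim]
      simp
  simp only [h1, h2]
  exact Finset.sum_comm

section Dblocks
variable (ces : Fin n × Fin n → Fin m × Fin m → ℝ)
variable (ced : Fin n × Fin n → ℝ) (cei : Fin m × Fin m → ℝ) (ω : ℝ)
variable {P}

lemma DsigLL (i j : Fin n) :
    Dmat E1 E2 ces ced cei ω (inl i, sigmaOf P (inl i)) (inl j, sigmaOf P (inl j))
      = (tauOf P i).elim (if (i, j) ∈ E1 then ced (i, j) else 0)
          (fun k => (tauOf P j).elim (if (i, j) ∈ E1 then ced (i, j) else 0)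
            (fun l => if (i, j) ∈ E1 then
                        (if (k, l) ∈ E2 then ces (i, j) (k, l) else ced (i, j))
                      else (if (k, l) ∈ E2 then cei (k, l) else 0))) := by
  cases hti : tauOf P i <;> cases htj : tauOf P j <;>
    by_cases h1 : (i, j) ∈ E1 <;>
    simp [Dmat, sigmaOf, hti, htj, allowedMap, edgeOf, h1] <;>
    split_ifs <;> simp_all

lemma DsigLR (i : Fin n) (k2 : Fin m) :
    Dmat E1 E2 ces ced cei ω (inl i, sigmaOf P (inl i)) (inr k2, sigmaOf P (inr k2))
      = (tauOf P i).elim 0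
          (fun k => (rhoOf P k2).elim (if (k, k2) ∈ E2 then cei (k, k2) else 0)
            (fun _ => 0)) := by
  cases hti : tauOf P i <;> cases hr2 : rhoOf P k2 <;>
    simp [Dmat, sigmaOf, hti, hr2, allowedMap, edgeOf] <;>
    split_ifs <;> simp_all

lemma DsigRL (k1 : Fin m) (j : Fin n) :
    Dmat E1 E2 ces ced cei ω (inr k1, sigmaOf P (inr k1)) (inl j, sigmaOf P (inl j))
      = (rhoOf P k1).elim
          ((tauOf P j).elim 0
            (fun l => if (k1, l) ∈ E2 then cei (k1, l) else 0))
          (fun _ => 0) := by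
  cases hr1 : rhoOf P k1 <;> cases htj : tauOf P j <;>
    simp [Dmat, sigmaOf, hr1, htj, allowedMap, edgeOf] <;>
    split_ifs <;> simp_all

lemma DsigRR (k1 k2 : Fin m) :
    Dmat E1 E2 ces ced cei ω (inr k1, sigmaOf P (inr k1)) (inr k2, sigmaOf P (inr k2))
      = (rhoOf P k1).elim
          ((rhoOf P k2).elim (if (k1, k2) ∈ E2 then cei (k1, k2) else 0)
            (fun _ => 0))
          (fun _ => 0) := by
  cases hr1 : rhoOf P k1 <;> cases hr2 : rhoOf P k2 <;>
    simp [Dmat, sigmaOf, hr1, hr2, allowedMap, edgeOf] <;>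
    split_ifs <;> simp_all

lemma quad_reduce :
    quadForm (Dmat E1 E2 ces ced cei ω) (assignOf P)
      = ∑ a1 : Fin n ⊕ Fin m, ∑ a2 : Fin n ⊕ Fin m,
          Dmat E1 E2 ces ced cei ω (a1, sigmaOf P a1) (a2, sigmaOf P a2) := by
  rw [quadForm]
  have e1 : ∀ p : AssignIdx n m,
      ∑ q : AssignIdx n m, assignOf P p * Dmat E1 E2 ces ced cei ω p q * assignOf P q
        = assignOf P p * ∑ a2 : Fin n ⊕ Fin m,
            Dmat E1 E2 ces ced cei ω p (a2, sigmaOf P a2) := by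
    intro p
    rw [Finset.mul_sum, Fintype.sum_prod_type]
    refine Finset.sum_congr rfl fun a2 _ => ?_
    have h : ∀ b2 : Fin m ⊕ Fin n,
        assignOf P p * Dmat E1 E2 ces ced cei ω p (a2, b2) * assignOf P (a2, b2)
          = if b2 = sigmaOf P a2
              then assignOf P p * Dmat E1 E2 ces ced cei ω p (a2, b2) else 0 := by
      intro b2
      by_cases hb : b2 = sigmaOf P a2
      · have hx1 : assignOf P (a2, b2) = 1 := by
          rw [assign_indicator]; simp [hb]
        rw [hx1, if_pos hb]; ring
      · have hx0 : assignOf P (a2, b2) = 0 := by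
          rw [assign_indicator]; exact if_neg hb
        rw [hx0, if_neg hb]; ring
    simp only [h]
    simp [Finset.sum_ite_eq']
  simp only [e1]
  rw [Fintype.sum_prod_type]
  refine Finset.sum_congr rfl fun a1 _ => ?_
  have h : ∀ b1 : Fin m ⊕ Fin n,
      (assignOf P (a1, b1) * ∑ a2 : Fin n ⊕ Fin m,
          Dmat E1 E2 ces ced cei ω (a1, b1) (a2, sigmaOf P a2))
        = if b1 = sigmaOf P a1
            then (∑ a2 : Fin n ⊕ Fin m,
              Dmat E1 E2 ces ced cei ω (a1, b1) (a2, sigmaOf P a2)) else 0 := by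
    intro b1
    by_cases hb : b1 = sigmaOf P a1
    · have hx1 : assignOf P (a1, b1) = 1 := by
        rw [assign_indicator]; simp [hb]
      rw [hx1, if_pos hb]; ring
    · have hx0 : assignOf P (a1, b1) = 0 := by
        rw [assign_indicator]; exact if_neg hb
      rw [hx0, if_neg hb]; ring
  simp only [h]
  simp [Finset.sum_ite_eq']

lemma sum_esub :
    ∑ q ∈ P.esub, ces q.1 q.2
      = ∑ i : Fin n, ∑ j : Fin n,
          (tauOf P j).elim 0 (fun l => (tauOf P i).elim 0
            (fun k => if (i, j) ∈ E1 ∧ (k, l) ∈ E2 then ces (i, j) (k, l) else 0)) := by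
  have h0 : ∑ q ∈ P.esub, ces q.1 q.2
      = ∑ q : (Fin n × Fin n) × (Fin m × Fin m),
          if q ∈ P.esub then ces q.1 q.2 else 0 := by
    rw [Finset.sum_ite_mem, Finset.univ_inter]
  rw [h0, Fintype.sum_prod_type, Fintype.sum_prod_type]
  refine Finset.sum_congr rfl fun i _ => ?_
  refine Finset.sum_congr rfl fun j _ => ?_
  rw [Fintype.sum_prod_type]
  have hc : ∀ (k l : Fin m), ((((i, j), (k, l)) ∈ P.esub)) ↔
      ((((i, j) ∈ E1 ∧ (k, l) ∈ E2) ∧ tauOf P i = some k) ∧ tauOf P j = some l) := by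
    intro k l
    rw [mem_esub_iff, ← tau_some_iff, ← tau_some_iff]
    tauto
  have hpt : ∀ (k l : Fin m),
      (if ((i, j), (k, l)) ∈ P.esub then ces (i, j) (k, l) else 0)
        = if ((((i, j) ∈ E1 ∧ (k, l) ∈ E2) ∧ tauOf P i = some k) ∧ tauOf P j = some l)
            then ces (i, j) (k, l) else 0 := by
    intro k l
    exact if_congr (hc k l) rfl rfl
  simp only [hpt]
  have h1 : ∀ k : Fin m,
      (∑ l : Fin m, if ((((i, j) ∈ E1 ∧ (k, l) ∈ E2) ∧ tauOf P i = some k)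
            ∧ tauOf P j = some l) then ces (i, j) (k, l) else 0)
        = (tauOf P j).elim 0 (fun l =>
            if (((i, j) ∈ E1 ∧ (k, l) ∈ E2) ∧ tauOf P i = some k)
              then ces (i, j) (k, l) else 0) := fun k => sumCollapseOpt _ _ _
  simp only [h1]
  rw [sum_elim]
  cases htj : tauOf P j with
  | none => simp
  | some l =>
    simp only [Option.elim]
    exact sumCollapseOpt _ _ _

lemma sum_erem :
    ∑ e ∈ P.erem, ced e
      = ∑ i : Fin n, ∑ j : Fin n,
          (if (i, j) ∈ E1 then
            ((tauOf P i).elim (ced (i, j)) (fun k => (tauOf P j).elim (ced (i, j))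
              (fun l => if (k, l) ∈ E2 then 0 else ced (i, j))))
          else 0) := by
  have h0 : ∑ e ∈ P.erem, ced e
      = ∑ e : Fin n × Fin n, if e ∈ P.erem then ced e else 0 := by
    rw [Finset.sum_ite_mem, Finset.univ_inter]
  rw [h0, Fintype.sum_prod_type]
  refine Finset.sum_congr rfl fun i _ => ?_
  refine Finset.sum_congr rfl fun j _ => ?_
  have hrem : ((i, j) ∈ P.erem) ↔
      ((i, j) ∈ E1 ∧ ∀ k l : Fin m, ¬ (((i, j), (k, l)) ∈ P.esub)) := by
    rw [P.erem_eq, Finset.mem_sdiff]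
    constructor
    · rintro ⟨h1, h2⟩
      refine ⟨h1, fun k l hm => h2 (Finset.mem_image.2 ⟨_, hm, rfl⟩)⟩
    · rintro ⟨h1, h2⟩
      refine ⟨h1, fun hc => ?_⟩
      obtain ⟨q, hq, hq1⟩ := Finset.mem_image.1 hc
      exact h2 q.2.1 q.2.2 (by rw [← hq1] at *; simpa using hq)
  cases hti : tauOf P i with
  | none =>
    simp only [hti, Option.elim]
    by_cases h1 : (i, j) ∈ E1
    · rw [if_pos h1, if_pos ((hrem).2 ⟨h1, fun k l hm => by
        have := (mem_esub_iff P i j k l).1 hm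
        have h3 : tauOf P i = some k := (tau_some_iff P i k).2 this.2.2.1
        rw [hti] at h3
        exact nomatch h3⟩)]
    · rw [if_neg h1, if_neg (fun hm => h1 ((hrem).1 hm).1)]
  | some k0 =>
    cases htj : tauOf P j with
    | none =>
      simp only [hti, htj, Option.elim]
      by_cases h1 : (i, j) ∈ E1
      · rw [if_pos h1, if_pos ((hrem).2 ⟨h1, fun k l hm => by
          have := (mem_esub_iff P i j k l).1 hm
          have h3 : tauOf P j = some l := (tau_some_iff P j l).2 this.2.2.2
          rw [htj] at h3
          exact nomatch h3⟩)]
      · rw [if_neg h1, if_neg (fun hm => h1 ((hrem).1 hm).1)]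
    | some l0 =>
      simp only [hti, htj, Option.elim]
      by_cases h1 : (i, j) ∈ E1
      · by_cases h2 : (k0, l0) ∈ E2
        · rw [if_pos h1, if_pos h2, if_neg]
          intro hm
          exact ((hrem).1 hm).2 k0 l0 ((mem_esub_iff P i j k0 l0).2
            ⟨h1, h2, (tau_some_iff P i k0).1 hti, (tau_some_iff P j l0).1 htj⟩)
        · rw [if_pos h1, if_neg h2, if_pos]
          refine (hrem).2 ⟨h1, fun k l hm => h2 ?_⟩
          have h3 := (mem_esub_iff P i j k l).1 hm
          have hk : k = k0 := by
            have := (tau_some_iff P i k).2 h3.2.2.1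
            rw [hti] at this
            exact (Option.some_injective _ this).symm
          have hl : l = l0 := by
            have := (tau_some_iff P j l).2 h3.2.2.2
            rw [htj] at this
            exact (Option.some_injective _ this).symm
          rw [← hk, ← hl]
          exact h3.2.1
      · rw [if_neg h1, if_neg (fun hm => h1 ((hrem).1 hm).1)]

lemma sum_eins :
    ∑ f ∈ P.eins, cei f
      = ∑ k1 : Fin m, ∑ k2 : Fin m,
          (if (k1, k2) ∈ E2 then
            ((rhoOf P k1).elim (cei (k1, k2)) (fun i => (rhoOf P k2).elim (cei (k1, k2))
              (fun j => if (i, j) ∈ E1 then 0 else cei (k1, k2))))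
          else 0) := by
  have h0 : ∑ f ∈ P.eins, cei f
      = ∑ f : Fin m × Fin m, if f ∈ P.eins then cei f else 0 := by
    rw [Finset.sum_ite_mem, Finset.univ_inter]
  rw [h0, Fintype.sum_prod_type]
  refine Finset.sum_congr rfl fun k1 _ => ?_
  refine Finset.sum_congr rfl fun k2 _ => ?_
  have hins : ((k1, k2) ∈ P.eins) ↔
      ((k1, k2) ∈ E2 ∧ ∀ i j : Fin n, ¬ (((i, j), (k1, k2)) ∈ P.esub)) := by
    rw [P.eins_eq, Finset.mem_sdiff]
    constructor
    · rintro ⟨h1, h2⟩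
      refine ⟨h1, fun i j hm => h2 (Finset.mem_image.2 ⟨_, hm, rfl⟩)⟩
    · rintro ⟨h1, h2⟩
      refine ⟨h1, fun hc => ?_⟩
      obtain ⟨q, hq, hq1⟩ := Finset.mem_image.1 hc
      exact h2 q.1.1 q.1.2 (by rw [← hq1] at *; simpa using hq)
  cases hr1 : rhoOf P k1 with
  | none =>
    simp only [hr1, Option.elim]
    by_cases h1 : (k1, k2) ∈ E2
    · rw [if_pos h1, if_pos ((hins).2 ⟨h1, fun i j hm => by
        have := (mem_esub_iff P i j k1 k2).1 hm
        have h3 : rhoOf P k1 = some i := (rho_some_iff P k1 i).2 this.2.2.1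
        rw [hr1] at h3
        exact nomatch h3⟩)]
    · rw [if_neg h1, if_neg (fun hm => h1 ((hins).1 hm).1)]
  | some i0 =>
    cases hr2 : rhoOf P k2 with
    | none =>
      simp only [hr1, hr2, Option.elim]
      by_cases h1 : (k1, k2) ∈ E2
      · rw [if_pos h1, if_pos ((hins).2 ⟨h1, fun i j hm => by
          have := (mem_esub_iff P i j k1 k2).1 hm
          have h3 : rhoOf P k2 = some j := (rho_some_iff P k2 j).2 this.2.2.2
          rw [hr2] at h3
          exact nomatch h3⟩)]
      · rw [if_neg h1, if_neg (fun hm => h1 ((hins).1 hm).1)]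
    | some j0 =>
      simp only [hr1, hr2, Option.elim]
      by_cases h1 : (k1, k2) ∈ E2
      · by_cases h2 : (i0, j0) ∈ E1
        · rw [if_pos h1, if_pos h2, if_neg]
          intro hm
          exact ((hins).1 hm).2 i0 j0 ((mem_esub_iff P i0 j0 k1 k2).2
            ⟨h2, h1, (rho_some_iff P k1 i0).1 hr1, (rho_some_iff P k2 j0).1 hr2⟩)
        · rw [if_pos h1, if_neg h2, if_pos]
          refine (hins).2 ⟨h1, fun i j hm => h2 ?_⟩
          have h3 := (mem_esub_iff P i j k1 k2).1 hm
          have hi : i = i0 := by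
            have := (rho_some_iff P k1 i).2 h3.2.2.1
            rw [hr1] at this
            exact (Option.some_injective _ this).symm
          have hj : j = j0 := by
            have := (rho_some_iff P k2 j).2 h3.2.2.2
            rw [hr2] at this
            exact (Option.some_injective _ this).symm
          rw [← hi, ← hj]
          exact h3.1
      · rw [if_neg h1, if_neg (fun hm => h1 ((hins).1 hm).1)]

lemma LL_split (i j : Fin n) :
    (tauOf P i).elim (if (i, j) ∈ E1 then ced (i, j) else 0)
      (fun k => (tauOf P j).elim (if (i, j) ∈ E1 then ced (i, j) else 0)
        (fun l => if (i, j) ∈ E1 then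
                    (if (k, l) ∈ E2 then ces (i, j) (k, l) else ced (i, j))
                  else (if (k, l) ∈ E2 then cei (k, l) else 0)))
    = ((tauOf P j).elim 0 (fun l => (tauOf P i).elim 0
          (fun k => if (i, j) ∈ E1 ∧ (k, l) ∈ E2 then ces (i, j) (k, l) else 0)))
      + (if (i, j) ∈ E1 then
          ((tauOf P i).elim (ced (i, j)) (fun k => (tauOf P j).elim (ced (i, j))
            (fun l => if (k, l) ∈ E2 then 0 else ced (i, j))))
        else 0)
      + ((tauOf P j).elim 0 (fun l => (tauOf P i).elim 0
          (fun k => if (i, j) ∈ E1 then 0 else (if (k, l) ∈ E2 then cei (k, l) else 0)))) := by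
  cases hti : tauOf P i <;> cases htj : tauOf P j <;>
    simp only [Option.elim] <;> split_ifs <;> simp_all <;> ring

lemma CLL_convert :
    (∑ i : Fin n, ∑ j : Fin n, (tauOf P j).elim 0 (fun l => (tauOf P i).elim 0
        (fun k => if (i, j) ∈ E1 then 0 else (if (k, l) ∈ E2 then cei (k, l) else 0))))
    = ∑ k1 : Fin m, ∑ k2 : Fin m, (rhoOf P k2).elim 0 (fun j => (rhoOf P k1).elim 0
        (fun i => if (i, j) ∈ E1 then 0 else (if (k1, k2) ∈ E2 then cei (k1, k2) else 0))) := by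
  calc (∑ i : Fin n, ∑ j : Fin n, (tauOf P j).elim 0 (fun l => (tauOf P i).elim 0
        (fun k => if (i, j) ∈ E1 then 0 else (if (k, l) ∈ E2 then cei (k, l) else 0))))
      = ∑ i : Fin n, ∑ k2 : Fin m, (rhoOf P k2).elim 0 (fun j => (tauOf P i).elim 0
          (fun k1 => if (i, j) ∈ E1 then 0 else (if (k1, k2) ∈ E2 then cei (k1, k2) else 0))) :=
        Finset.sum_congr rfl fun i _ => tau_to_rho P _
    _ = ∑ k2 : Fin m, ∑ i : Fin n, (rhoOf P k2).elim 0 (fun j => (tauOf P i).elim 0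
          (fun k1 => if (i, j) ∈ E1 then 0 else (if (k1, k2) ∈ E2 then cei (k1, k2) else 0))) :=
        Finset.sum_comm
    _ = ∑ k2 : Fin m, (rhoOf P k2).elim 0 (fun j => ∑ i : Fin n, (tauOf P i).elim 0
          (fun k1 => if (i, j) ∈ E1 then 0 else (if (k1, k2) ∈ E2 then cei (k1, k2) else 0))) :=
        Finset.sum_congr rfl fun k2 _ => sum_elim _ _
    _ = ∑ k2 : Fin m, (rhoOf P k2).elim 0 (fun j => ∑ k1 : Fin m, (rhoOf P k1).elim 0
          (fun i => if (i, j) ∈ E1 then 0 else (if (k1, k2) ∈ E2 then cei (k1, k2) else 0))) := by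
        refine Finset.sum_congr rfl fun k2 _ => ?_
        cases hr : rhoOf P k2 with
        | none => rfl
        | some j => exact tau_to_rho P _
    _ = ∑ k2 : Fin m, ∑ k1 : Fin m, (rhoOf P k2).elim 0 (fun j => (rhoOf P k1).elim 0
          (fun i => if (i, j) ∈ E1 then 0 else (if (k1, k2) ∈ E2 then cei (k1, k2) else 0))) :=
        Finset.sum_congr rfl fun k2 _ => (sum_elim _ _).symm
    _ = ∑ k1 : Fin m, ∑ k2 : Fin m, (rhoOf P k2).elim 0 (fun j => (rhoOf P k1).elim 0
          (fun i => if (i, j) ∈ E1 then 0 else (if (k1, k2) ∈ E2 then cei (k1, k2) else 0))) :=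
        Finset.sum_comm

lemma LR_convert :
    (∑ i : Fin n, ∑ k2 : Fin m, (tauOf P i).elim 0
        (fun k => (rhoOf P k2).elim (if (k, k2) ∈ E2 then cei (k, k2) else 0) (fun _ => 0)))
    = ∑ k1 : Fin m, ∑ k2 : Fin m, (rhoOf P k1).elim 0
        (fun _ => (rhoOf P k2).elim (if (k1, k2) ∈ E2 then cei (k1, k2) else 0) (fun _ => 0)) := by
  calc (∑ i : Fin n, ∑ k2 : Fin m, (tauOf P i).elim 0
        (fun k => (rhoOf P k2).elim (if (k, k2) ∈ E2 then cei (k, k2) else 0) (fun _ => 0)))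
      = ∑ i : Fin n, (tauOf P i).elim 0
          (fun k => ∑ k2 : Fin m, (rhoOf P k2).elim (if (k, k2) ∈ E2 then cei (k, k2) else 0)
            (fun _ => 0)) := by
        refine Finset.sum_congr rfl fun i _ => ?_
        cases hti : tauOf P i with
        | none => simp
        | some k => rfl
    _ = ∑ k1 : Fin m, (rhoOf P k1).elim 0
          (fun _ => ∑ k2 : Fin m, (rhoOf P k2).elim (if (k1, k2) ∈ E2 then cei (k1, k2) else 0)
            (fun _ => 0)) := tau_to_rho P _
    _ = ∑ k1 : Fin m, ∑ k2 : Fin m, (rhoOf P k1).elim 0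
          (fun _ => (rhoOf P k2).elim (if (k1, k2) ∈ E2 then cei (k1, k2) else 0) (fun _ => 0)) := by
        refine Finset.sum_congr rfl fun k1 _ => ?_
        cases hr : rhoOf P k1 with
        | none => simp
        | some i => rfl

lemma RL_convert :
    (∑ k1 : Fin m, ∑ j : Fin n, (rhoOf P k1).elim
        ((tauOf P j).elim 0 (fun l => if (k1, l) ∈ E2 then cei (k1, l) else 0)) (fun _ => 0))
    = ∑ k1 : Fin m, ∑ k2 : Fin m, (rhoOf P k1).elim
        ((rhoOf P k2).elim 0 (fun _ => if (k1, k2) ∈ E2 then cei (k1, k2) else 0)) (fun _ => 0) := by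
  refine Finset.sum_congr rfl fun k1 _ => ?_
  cases hr1 : rhoOf P k1 with
  | none =>
    simp only [Option.elim]
    exact tau_to_rho P _
  | some i => simp

lemma B_pt (k1 k2 : Fin m) :
    (rhoOf P k2).elim 0 (fun j => (rhoOf P k1).elim 0
        (fun i => if (i, j) ∈ E1 then 0 else (if (k1, k2) ∈ E2 then cei (k1, k2) else 0)))
    + (rhoOf P k1).elim 0
        (fun _ => (rhoOf P k2).elim (if (k1, k2) ∈ E2 then cei (k1, k2) else 0) (fun _ => 0))
    + (rhoOf P k1).elim
        ((rhoOf P k2).elim 0 (fun _ => if (k1, k2) ∈ E2 then cei (k1, k2) else 0)) (fun _ => 0)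
    + (rhoOf P k1).elim
        ((rhoOf P k2).elim (if (k1, k2) ∈ E2 then cei (k1, k2) else 0) (fun _ => 0)) (fun _ => 0)
    = (if (k1, k2) ∈ E2 then
        ((rhoOf P k1).elim (cei (k1, k2)) (fun i => (rhoOf P k2).elim (cei (k1, k2))
          (fun j => if (i, j) ∈ E1 then 0 else cei (k1, k2))))
      else 0) := by
  cases hr1 : rhoOf P k1 <;> cases hr2 : rhoOf P k2 <;>
    simp only [Option.elim] <;> split_ifs <;> simp_all <;> ring

lemma quad_eq :
    quadForm (Dmat E1 E2 ces ced cei ω) (assignOf P)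
      = (∑ q ∈ P.esub, ces q.1 q.2) + (∑ e ∈ P.erem, ced e)
        + (∑ f ∈ P.eins, cei f) := by
  rw [quad_reduce (ces := ces) (ced := ced) (cei := cei) (ω := ω)]
  rw [Fintype.sum_sum_type]
  simp only [Fintype.sum_sum_type]
  simp only [DsigLL ces ced cei ω, DsigLR ces ced cei ω, DsigRL ces ced cei ω,
    DsigRR ces ced cei ω]
  simp only [LL_split ces ced cei]
  simp only [Finset.sum_add_distrib]
  rw [sum_esub ces, sum_erem ced, sum_eins cei, CLL_convert cei, LR_convert cei,
    RL_convert cei]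
  have hB : (∑ k1 : Fin m, ∑ k2 : Fin m, ((rhoOf P k2).elim 0 (fun j => (rhoOf P k1).elim 0
        (fun i => if (i, j) ∈ E1 then 0 else (if (k1, k2) ∈ E2 then cei (k1, k2) else 0)))
      + (rhoOf P k1).elim 0
          (fun _ => (rhoOf P k2).elim (if (k1, k2) ∈ E2 then cei (k1, k2) else 0) (fun _ => 0))
      + (rhoOf P k1).elim
          ((rhoOf P k2).elim 0 (fun _ => if (k1, k2) ∈ E2 then cei (k1, k2) else 0)) (fun _ => 0)
      + (rhoOf P k1).elim
          ((rhoOf P k2).elim (if (k1, k2) ∈ E2 then cei (k1, k2) else 0) (fun _ => 0)) (fun _ => 0)))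
      = ∑ k1 : Fin m, ∑ k2 : Fin m, (if (k1, k2) ∈ E2 then
          ((rhoOf P k1).elim (cei (k1, k2)) (fun i => (rhoOf P k2).elim (cei (k1, k2))
            (fun j => if (i, j) ∈ E1 then 0 else cei (k1, k2))))
        else 0) :=
    Finset.sum_congr rfl fun k1 _ => Finset.sum_congr rfl fun k2 _ => B_pt cei k1 k2
  simp only [Finset.sum_add_distrib] at hB
  linarith [hB]

end Dblocks

end Path

lemma eps_zero {x : AssignIdx n m → ℝ} (hx : IsEpsAssign x) (p : AssignIdx n m)
    (hp : ¬ (allowedMap p.1 p.2 = true)) : x p = 0 := by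
  obtain ⟨h01, -, -, h4, h5⟩ := hx
  obtain ⟨a, b⟩ := p
  cases a with
  | inl i =>
    cases b with
    | inl k => exact absurd rfl hp
    | inr i' =>
      refine (h01 _).resolve_right fun h => hp ?_
      have := h4 i i' h
      simp [allowedMap, this]
  | inr k =>
    cases b with
    | inl k' =>
      refine (h01 _).resolve_right fun h => hp ?_
      have := h5 k k' h
      simp [allowedMap, this]
    | inr i => exact absurd rfl hp

section Costs
variable (ces : Fin n × Fin n → Fin m × Fin m → ℝ)
variable (ced : Fin n × Fin n → ℝ) (cei : Fin m × Fin m → ℝ) (ω : ℝ)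

lemma Dmat_rr (k : Fin m) (i : Fin n) (q : AssignIdx n m)
    (hq : allowedMap q.1 q.2 = true) :
    Dmat E1 E2 ces ced cei ω (inr k, inr i) q = 0
      ∧ Dmat E1 E2 ces ced cei ω q (inr k, inr i) = 0 := by
  obtain ⟨a, b⟩ := q
  constructor <;> cases a <;> cases b <;>
    simp_all [Dmat, allowedMap, edgeOf]

lemma Dmat_rr' (k : Fin m) (i : Fin n) (q : AssignIdx n m)
    (hq : allowedMap q.1 q.2 = true) :
    (fun p q => Dmat E1 E2 ces ced cei ω p q + Dmat E1 E2 ces ced cei ω q p)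
        (inr k, inr i) q = 0
      ∧ (fun p q => Dmat E1 E2 ces ced cei ω p q + Dmat E1 E2 ces ced cei ω q p)
        q (inr k, inr i) = 0 := by
  obtain ⟨h1, h2⟩ := Dmat_rr (E1 := E1) (E2 := E2) ces ced cei ω k i q hq
  constructor <;> simp [h1, h2]

lemma quad_match {x : AssignIdx n m → ℝ} (hx : IsEpsAssign x)
    (P : RestrictedEditPath n m E1 E2)
    (hagree : ∀ p : AssignIdx n m, (∀ k i, p ≠ (inr k, inr i)) → x p = assignOf P p)
    (M : AssignIdx n m → AssignIdx n m → ℝ)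
    (hM : ∀ (k : Fin m) (i : Fin n) (q : AssignIdx n m), allowedMap q.1 q.2 = true →
      M (inr k, inr i) q = 0 ∧ M q (inr k, inr i) = 0) :
    quadForm M x = quadForm M (assignOf P) := by
  unfold quadForm
  refine Finset.sum_congr rfl fun p _ => Finset.sum_congr rfl fun q _ => ?_
  by_cases hp : ∀ k i, p ≠ (inr k, inr i)
  · by_cases hq : ∀ k i, q ≠ (inr k, inr i)
    · rw [hagree p hp, hagree q hq]
    · push_neg at hq
      obtain ⟨k, i, rfl⟩ := hq
      by_cases hpa : allowedMap p.1 p.2 = true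
      · rw [(hM k i p hpa).2]; ring
      · rw [eps_zero hx p hpa, eps_zero (isEps P) p hpa]; ring
  · push_neg at hp
    obtain ⟨k, i, rfl⟩ := hp
    by_cases hqa : allowedMap q.1 q.2 = true
    · rw [(hM k i q hqa).1]; ring
    · rw [eps_zero hx q hqa, eps_zero (isEps P) q hqa]; ring

lemma lin_match {x : AssignIdx n m → ℝ} (P : RestrictedEditPath n m E1 E2)
    (hagree : ∀ p : AssignIdx n m, (∀ k i, p ≠ (inr k, inr i)) → x p = assignOf P p)
    (cvs : Fin n → Fin m → ℝ) (cvd : Fin n → ℝ) (cvi : Fin m → ℝ) :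
    linForm (cvecQ cvs cvd cvi ω) x = linForm (cvecQ cvs cvd cvi ω) (assignOf P) := by
  unfold linForm
  refine Finset.sum_congr rfl fun p _ => ?_
  by_cases hp : ∀ k i, p ≠ (inr k, inr i)
  · rw [hagree p hp]
  · push_neg at hp
    obtain ⟨k, i, rfl⟩ := hp
    simp [cvecQ]

end Costs

lemma exists_path (x : AssignIdx n m → ℝ) (hx : IsEpsAssign x) :
    ∃ P : RestrictedEditPath n m E1 E2,
      ∀ p : AssignIdx n m, (∀ k i, p ≠ (inr k, inr i)) → x p = assignOf P p := by
  classical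
  obtain ⟨h01, hrow, hcol, h4, h5⟩ := hx
  set s : Finset (Fin n × Fin m) :=
    Finset.univ.filter (fun p => x (inl p.1, inl p.2) = 1) with hs
  set eS : Finset ((Fin n × Fin n) × (Fin m × Fin m)) :=
    (E1 ×ˢ E2).filter (fun q => (q.1.1, q.2.1) ∈ s ∧ (q.1.2, q.2.2) ∈ s) with heS
  have pf_fun : ∀ p ∈ s, ∀ q ∈ s, p.1 = q.1 → p.2 = q.2 := by
    intro p hp q hq h1
    have hxp : x (inl p.1, inl p.2) = 1 := (Finset.mem_filter.1 hp).2
    have hxq : x (inl q.1, inl q.2) = 1 := (Finset.mem_filter.1 hq).2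
    rw [← h1] at hxq
    have h2 := two_ones (fun b => x (inl p.1, b)) (fun b => h01 _)
      (hrow (inl p.1)) hxp hxq
    exact inl_injective h2
  have pf_inj : ∀ p ∈ s, ∀ q ∈ s, p.2 = q.2 → p.1 = q.1 := by
    intro p hp q hq h1
    have hxp : x (inl p.1, inl p.2) = 1 := (Finset.mem_filter.1 hp).2
    have hxq : x (inl q.1, inl q.2) = 1 := (Finset.mem_filter.1 hq).2
    rw [← h1] at hxq
    have h2 := two_ones (fun a => x (a, inl p.2)) (fun a => h01 _)
      (hcol (inl p.2)) hxp hxq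
    exact inl_injective h2
  have pf_mem : ∀ q ∈ eS, q.1 ∈ E1 ∧ q.2 ∈ E2 ∧ (q.1.1, q.2.1) ∈ s ∧ (q.1.2, q.2.2) ∈ s := by
    intro q hq
    obtain ⟨hq1, hq2⟩ := Finset.mem_filter.1 hq
    exact ⟨(Finset.mem_product.1 hq1).1, (Finset.mem_product.1 hq1).2, hq2.1, hq2.2⟩
  have pf_total : ∀ e ∈ E1, ∀ (k l : Fin m),
      (e.1, k) ∈ s → (e.2, l) ∈ s → (k, l) ∈ E2 → (e, (k, l)) ∈ eS := by
    intro e he k l h1 h2 h3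
    exact Finset.mem_filter.2 ⟨Finset.mem_product.2 ⟨he, h3⟩, h1, h2⟩
  refine ⟨⟨s, Finset.univ \ s.image Prod.fst, Finset.univ \ s.image Prod.snd,
    eS, E1 \ eS.image Prod.fst, E2 \ eS.image Prod.snd,
    pf_fun, pf_inj, rfl, rfl, pf_mem, pf_total, rfl, rfl⟩, ?_⟩
  intro p hp
  set P : RestrictedEditPath n m E1 E2 :=
    ⟨s, Finset.univ \ s.image Prod.fst, Finset.univ \ s.image Prod.snd,
    eS, E1 \ eS.image Prod.fst, E2 \ eS.image Prod.snd,
    pf_fun, pf_inj, rfl, rfl, pf_mem, pf_total, rfl, rfl⟩ with hP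
  show x p = assignOf P p
  have hnsub : P.nsub = s := rfl
  have hnrem : ∀ i : Fin n, i ∈ P.nrem ↔ ∀ k, (i, k) ∉ s := fun i => mem_nrem_iff P i
  have hnins : ∀ k : Fin m, k ∈ P.nins ↔ ∀ i, (i, k) ∉ s := fun k => mem_nins_iff P k
  obtain ⟨a, b⟩ := p
  cases a with
  | inl i =>
    cases b with
    | inl k =>
      by_cases hin : (i, k) ∈ s
      · have := (Finset.mem_filter.1 hin).2
        simp only [assignOf, hnsub, if_pos hin]
        exact this
      · have hx0 : x (inl i, inl k) = 0 := (h01 _).resolve_right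
          (fun h => hin (Finset.mem_filter.2 ⟨Finset.mem_univ _, h⟩))
        simp only [assignOf, hnsub, if_neg hin]
        exact hx0
    | inr i' =>
      by_cases hc : i' = i
      · subst hc
        by_cases hrem : ∀ k, (i', k) ∉ s
        · have hz : ∀ b : Fin m ⊕ Fin n, b ≠ inr i' → x (inl i', b) = 0 := by
            intro b hb
            cases b with
            | inl k =>
              have hx0' : x (inl i', inl k) = 0 := (h01 (inl i', inl k)).resolve_right
                (fun h => hrem k (Finset.mem_filter.2 ⟨Finset.mem_univ _, h⟩))
              exact hx0'
            | inr i'' =>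
              refine (h01 _).resolve_right fun h => hb ?_
              rw [h4 i' i'' h]
          have h1 : ∑ b : Fin m ⊕ Fin n, x (inl i', b) = x (inl i', inr i') :=
            Fintype.sum_eq_single (inr i') hz
          rw [hrow (inl i')] at h1
          have hmem' : i' ∈ Finset.univ \ s.image Prod.fst := (hnrem i').2 hrem
          simp only [assignOf]
          rw [if_pos]
          · exact h1.symm
          · exact ⟨trivial, hmem'⟩
        · push_neg at hrem
          obtain ⟨k, hk⟩ := hrem
          have hxk : x (inl i', inl k) = 1 := (Finset.mem_filter.1 hk).2
          have hx0 : x (inl i', inr i') = 0 := (h01 _).resolve_right (fun h => by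
            have h2 := two_ones (fun b => x (inl i', b)) (fun b => h01 _)
              (hrow (inl i')) hxk h
            exact absurd h2 (by simp))
          simp only [assignOf]
          rw [if_neg, hx0]
          rintro ⟨-, hmem⟩
          exact (hnrem i').1 hmem k hk
      · have hx0 : x (inl i, inr i') = 0 :=
          (h01 _).resolve_right (fun h => hc (h4 i i' h))
        simp only [assignOf]
        rw [if_neg, hx0]
        rintro ⟨h, -⟩
        exact hc h
  | inr k =>
    cases b with
    | inl k' =>
      by_cases hc : k' = k
      · subst hc
        by_cases hins : ∀ i, (i, k') ∉ s
        · have hz : ∀ a : Fin n ⊕ Fin m, a ≠ inr k' → x (a, inl k') = 0 := by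
            intro a ha
            cases a with
            | inl i =>
              have hx0' : x (inl i, inl k') = 0 := (h01 (inl i, inl k')).resolve_right
                (fun h => hins i (Finset.mem_filter.2 ⟨Finset.mem_univ _, h⟩))
              exact hx0'
            | inr k'' =>
              refine (h01 _).resolve_right fun h => ha ?_
              rw [h5 k'' k' h]
          have h1 : ∑ a : Fin n ⊕ Fin m, x (a, inl k') = x (inr k', inl k') :=
            Fintype.sum_eq_single (inr k') hz
          rw [hcol (inl k')] at h1
          have hmem' : k' ∈ Finset.univ \ s.image Prod.snd := (hnins k').2 hins
          simp only [assignOf]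
          rw [if_pos]
          · exact h1.symm
          · exact ⟨trivial, hmem'⟩
        · push_neg at hins
          obtain ⟨i, hi⟩ := hins
          have hxi : x (inl i, inl k') = 1 := (Finset.mem_filter.1 hi).2
          have hx0 : x (inr k', inl k') = 0 := (h01 _).resolve_right (fun h => by
            have h2 := two_ones (fun a => x (a, inl k')) (fun a => h01 _)
              (hcol (inl k')) hxi h
            exact absurd h2 (by simp))
          simp only [assignOf]
          rw [if_neg, hx0]
          rintro ⟨-, hmem⟩
          exact (hnins k').1 hmem i hi
      · have hx0 : x (inr k, inl k') = 0 :=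
          (h01 _).resolve_right (fun h => hc (h5 k k' h))
        simp only [assignOf]
        rw [if_neg, hx0]
        rintro ⟨h, -⟩
        exact hc h
    | inr i => exact absurd rfl (hp k i)

lemma quadForm_addT (ces : Fin n × Fin n → Fin m × Fin m → ℝ)
    (ced : Fin n × Fin n → ℝ) (cei : Fin m × Fin m → ℝ) (ω : ℝ)
    (x : AssignIdx n m → ℝ) :
    quadForm (fun p q => Dmat E1 E2 ces ced cei ω p q + Dmat E1 E2 ces ced cei ω q p) x
      = 2 * quadForm (Dmat E1 E2 ces ced cei ω) x := by
  unfold quadForm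
  simp only [mul_add, add_mul, Finset.sum_add_distrib]
  have h2 : (∑ p : AssignIdx n m, ∑ q : AssignIdx n m,
        x p * Dmat E1 E2 ces ced cei ω q p * x q)
      = ∑ p : AssignIdx n m, ∑ q : AssignIdx n m,
        x p * Dmat E1 E2 ces ced cei ω p q * x q := by
    rw [Finset.sum_comm]
    exact Finset.sum_congr rfl fun p _ => Finset.sum_congr rfl fun q _ => by ring
  rw [h2]
  ring

end GEDHelpers

/-- let `Δ = D + Dᵀ` if the graphs are directed and `Δ = D` if
both are undirected.  The cost of the restricted edit path corresponding to an
ε-assignment vector `x` equals `(1/2)xᵀΔx + cᵀx`; conversely, every restricted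
edit path's cost is of this form; consequently
`GED(G1,G2) = min { (1/2)xᵀΔx + cᵀx : x a vectorized ε-assignment matrix }`
(GED being the minimal cost of a restricted edit path). -/
theorem ged_eq_qap (n m : ℕ) (E1 : Finset (Fin n × Fin n))
    (E2 : Finset (Fin m × Fin m))
    (hs1 : ∀ i : Fin n, (i, i) ∉ E1) (hs2 : ∀ k : Fin m, (k, k) ∉ E2)
    (cvs : Fin n → Fin m → ℝ) (cvd : Fin n → ℝ) (cvi : Fin m → ℝ)
    (ces : Fin n × Fin n → Fin m × Fin m → ℝ)
    (ced : Fin n × Fin n → ℝ) (cei : Fin m × Fin m → ℝ) (ω : ℝ) :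
    letI D := Dmat E1 E2 ces ced cei ω
    letI c := cvecQ cvs cvd cvi ω
    -- directed case: Δ = D + Dᵀ, each edge operation counted once
    ((letI Δ := fun p q : AssignIdx n m => D p q + D q p
      (∀ P : RestrictedEditPath n m E1 E2, IsEpsAssign (assignOf P) ∧
        (1 / 2 : ℝ) * quadForm Δ (assignOf P) + linForm c (assignOf P) =
          pathCostR cvs cvd cvi ces ced cei 1 P) ∧
      (∀ x : AssignIdx n m → ℝ, IsEpsAssign x →
        ∃ P : RestrictedEditPath n m E1 E2,
          (1 / 2 : ℝ) * quadForm Δ x + linForm c x =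
            pathCostR cvs cvd cvi ces ced cei 1 P) ∧
      sInf {r : ℝ | ∃ P : RestrictedEditPath n m E1 E2,
          pathCostR cvs cvd cvi ces ced cei 1 P = r} =
        sInf {r : ℝ | ∃ x : AssignIdx n m → ℝ, IsEpsAssign x ∧
          (1 / 2 : ℝ) * quadForm Δ x + linForm c x = r}) ∧
    -- undirected case: Δ = D (which is then symmetric), edges stored in both
    -- orientations, hence the factor 1/2 on edge operation costs
    ((∀ i j : Fin n, (i, j) ∈ E1 ↔ (j, i) ∈ E1) →
     (∀ k l : Fin m, (k, l) ∈ E2 ↔ (l, k) ∈ E2) →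
     (∀ e f, ces (e.2, e.1) (f.2, f.1) = ces e f) →
     (∀ e, ced (e.2, e.1) = ced e) → (∀ f, cei (f.2, f.1) = cei f) →
      letI Δ := D
      (∀ P : RestrictedEditPath n m E1 E2, IsEpsAssign (assignOf P) ∧
        (1 / 2 : ℝ) * quadForm Δ (assignOf P) + linForm c (assignOf P) =
          pathCostR cvs cvd cvi ces ced cei (1 / 2) P) ∧
      (∀ x : AssignIdx n m → ℝ, IsEpsAssign x →
        ∃ P : RestrictedEditPath n m E1 E2,
          (1 / 2 : ℝ) * quadForm Δ x + linForm c x =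
            pathCostR cvs cvd cvi ces ced cei (1 / 2) P) ∧
      sInf {r : ℝ | ∃ P : RestrictedEditPath n m E1 E2,
          pathCostR cvs cvd cvi ces ced cei (1 / 2) P = r} =
        sInf {r : ℝ | ∃ x : AssignIdx n m → ℝ, IsEpsAssign x ∧
          (1 / 2 : ℝ) * quadForm Δ x + linForm c x = r})) := by
  classical
  have hval1 : ∀ P : RestrictedEditPath n m E1 E2,
      (1 / 2 : ℝ) * quadForm (fun p q : AssignIdx n m =>
          Dmat E1 E2 ces ced cei ω p q + Dmat E1 E2 ces ced cei ω q p) (assignOf P)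
        + linForm (cvecQ cvs cvd cvi ω) (assignOf P)
        = pathCostR cvs cvd cvi ces ced cei 1 P := by
    intro P
    rw [quadForm_addT, quad_eq ces ced cei ω, lin_eq P cvs cvd cvi ω, pathCostR]
    ring
  have hval2 : ∀ P : RestrictedEditPath n m E1 E2,
      (1 / 2 : ℝ) * quadForm (Dmat E1 E2 ces ced cei ω) (assignOf P)
        + linForm (cvecQ cvs cvd cvi ω) (assignOf P)
        = pathCostR cvs cvd cvi ces ced cei (1 / 2) P := by
    intro P
    rw [quad_eq ces ced cei ω, lin_eq P cvs cvd cvi ω, pathCostR]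
    ring
  have hex1 : ∀ x : AssignIdx n m → ℝ, IsEpsAssign x →
      ∃ P : RestrictedEditPath n m E1 E2,
        (1 / 2 : ℝ) * quadForm (fun p q : AssignIdx n m =>
            Dmat E1 E2 ces ced cei ω p q + Dmat E1 E2 ces ced cei ω q p) x
          + linForm (cvecQ cvs cvd cvi ω) x
          = pathCostR cvs cvd cvi ces ced cei 1 P := by
    intro x hx
    obtain ⟨P, hagree⟩ := exists_path x hx
    refine ⟨P, ?_⟩
    rw [quad_match hx P hagree _ (fun k i q hq => Dmat_rr' ces ced cei ω k i q hq),
      lin_match (ω := ω) P hagree cvs cvd cvi]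
    exact hval1 P
  have hex2 : ∀ x : AssignIdx n m → ℝ, IsEpsAssign x →
      ∃ P : RestrictedEditPath n m E1 E2,
        (1 / 2 : ℝ) * quadForm (Dmat E1 E2 ces ced cei ω) x
          + linForm (cvecQ cvs cvd cvi ω) x
          = pathCostR cvs cvd cvi ces ced cei (1 / 2) P := by
    intro x hx
    obtain ⟨P, hagree⟩ := exists_path x hx
    refine ⟨P, ?_⟩
    rw [quad_match hx P hagree _ (fun k i q hq => Dmat_rr ces ced cei ω k i q hq),
      lin_match (ω := ω) P hagree cvs cvd cvi]
    exact hval2 P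
  have hset1 : {r : ℝ | ∃ P : RestrictedEditPath n m E1 E2,
        pathCostR cvs cvd cvi ces ced cei 1 P = r}
      = {r : ℝ | ∃ x : AssignIdx n m → ℝ, IsEpsAssign x ∧
        (1 / 2 : ℝ) * quadForm (fun p q : AssignIdx n m =>
            Dmat E1 E2 ces ced cei ω p q + Dmat E1 E2 ces ced cei ω q p) x
          + linForm (cvecQ cvs cvd cvi ω) x = r} := by
    ext r
    constructor
    · rintro ⟨P, rfl⟩
      exact ⟨assignOf P, isEps P, hval1 P⟩
    · rintro ⟨x, hx, rfl⟩
      obtain ⟨P, hP⟩ := hex1 x hx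
      exact ⟨P, hP.symm⟩
  have hset2 : {r : ℝ | ∃ P : RestrictedEditPath n m E1 E2,
        pathCostR cvs cvd cvi ces ced cei (1 / 2) P = r}
      = {r : ℝ | ∃ x : AssignIdx n m → ℝ, IsEpsAssign x ∧
        (1 / 2 : ℝ) * quadForm (Dmat E1 E2 ces ced cei ω) x
          + linForm (cvecQ cvs cvd cvi ω) x = r} := by
    ext r
    constructor
    · rintro ⟨P, rfl⟩
      exact ⟨assignOf P, isEps P, hval2 P⟩
    · rintro ⟨x, hx, rfl⟩
      obtain ⟨P, hP⟩ := hex2 x hx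
      exact ⟨P, hP.symm⟩
  exact ⟨⟨fun P => ⟨isEps P, hval1 P⟩, hex1, by rw [hset1]⟩,
    fun _ _ _ _ _ => ⟨fun P => ⟨isEps P, hval2 P⟩, hex2, by rw [hset2]⟩⟩
end
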